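/- If sequences y1 and y2 in (ℝ^d)^n are at slack distance at most (s, ε) and y2 and y3 are at slack distance at most (s', ε'), then y1 and y3 are at slack distance at most (s + s', ε + ε'). -/
import Mathlib


/-- `y1` and `y2` are at slack distance at most `(t, ε)`: some subwindows of common
length `m ≥ n - t` are pointwise within distance `ε`. -/
def SlackDist {n d : ℕ} (y1 y2 : Fin n → EuclideanSpace ℝ (Fin d)) (t : ℕ) (ε : ℝ) : Prop :=
  ∃ i j m : ℕ, n - t ≤ m ∧ i + m ≤ n ∧ j + m ≤ n ∧
    ∀ k, k < m → ∀ (h1 : i + k < n) (h2 : j + k < n),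
      dist (y1 ⟨i + k, h1⟩) (y2 ⟨j + k, h2⟩) ≤ ε

theorem slack_triangle {n d : ℕ} (y1 y2 y3 : Fin n → EuclideanSpace ℝ (Fin d))
    (s s' : ℕ) (ε ε' : ℝ)
    (h12 : SlackDist y1 y2 s ε) (h23 : SlackDist y2 y3 s' ε') :
    SlackDist y1 y3 (s + s') (ε + ε') := by
  obtain ⟨i, j, m, hm, him, hjm, h1⟩ := h12
  obtain ⟨i', j', m', hm', him', hjm', h2⟩ := h23
  by_cases hn : n ≤ s + s'
  · exact ⟨0, 0, 0, by omega, by omega, by omega, by omega⟩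
  · push_neg at hn
    set a := max j i' with ha
    set b := min (j + m) (i' + m') with hb
    have hab : a ≤ b := by omega
    refine ⟨i + (a - j), j' + (a - i'), b - a, by omega, by omega, by omega, ?_⟩
    intro k hk hk1 hk3
    have hA : a + k < n := by omega
    have hd1 : dist (y1 ⟨i + (a - j) + k, hk1⟩) (y2 ⟨a + k, hA⟩) ≤ ε := by
      have h := h1 ((a - j) + k) (by omega) (by omega) (by omega)
      rwa [show (⟨i + ((a - j) + k), by omega⟩ : Fin n) = ⟨i + (a - j) + k, hk1⟩ from
        Fin.mk_eq_mk.mpr (by omega),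
        show (⟨j + ((a - j) + k), by omega⟩ : Fin n) = ⟨a + k, hA⟩ from
        Fin.mk_eq_mk.mpr (by omega)] at h
    have hd2 : dist (y2 ⟨a + k, hA⟩) (y3 ⟨j' + (a - i') + k, hk3⟩) ≤ ε' := by
      have h := h2 ((a - i') + k) (by omega) (by omega) (by omega)
      rwa [show (⟨i' + ((a - i') + k), by omega⟩ : Fin n) = ⟨a + k, hA⟩ from
        Fin.mk_eq_mk.mpr (by omega),
        show (⟨j' + ((a - i') + k), by omega⟩ : Fin n) = ⟨j' + (a - i') + k, hk3⟩ from
        Fin.mk_eq_mk.mpr (by omega)] at h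
    calc dist (y1 ⟨i + (a - j) + k, hk1⟩) (y3 ⟨j' + (a - i') + k, hk3⟩)
        ≤ dist (y1 ⟨i + (a - j) + k, hk1⟩) (y2 ⟨a + k, hA⟩)
          + dist (y2 ⟨a + k, hA⟩) (y3 ⟨j' + (a - i') + k, hk3⟩) := dist_triangle _ _ _
      _ ≤ ε + ε' := add_le_add hd1 hd2
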